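/- Let ḡ ∈ (max(0, 1 − S/N, 1 − 1/K), 1) with S, N, K, ρ > 0. Define g = (1−ḡ)/ḡ and δ via δ = (1−ḡ)/(ḡ(ḡ + S/N − 1)). Then the three scalar equations ḡ = 1/(1+g), g = (S/N)·δ/(1 + ḡδ), and δ = 1/(K·ḡg/δ + (S/N)/ρ) hold simultaneously if and only if ḡ is a root of ḡ³ − ḡ²(2 − S/N − 1/K) + ḡ(1 − S/N − 1/K + (S/(NK))(1 + 1/ρ)) − (S/(NK))(1/ρ) = 0. -/

import Mathlib

theorem rayleigh_product_fundamental_equations_iff_cubic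
    (S N K ρ : ℝ) (hS : 0 < S) (hN : 0 < N) (hK : 0 < K) (hρ : 0 < ρ)
    (gbar : ℝ) (hgbar : gbar ∈ Set.Ioo (max 0 (max (1 - S / N) (1 - 1 / K))) 1) :
    let g := (1 - gbar) / gbar
    let δ := (1 - gbar) / (gbar * (gbar + S / N - 1))
    (gbar = 1 / (1 + g) ∧ g = (S / N) * δ / (1 + gbar * δ) ∧
        δ = 1 / (K * gbar * g / δ + (S / N) / ρ)) ↔
      gbar ^ 3 - gbar ^ 2 * (2 - S / N - 1 / K) +
        gbar * (1 - S / N - 1 / K + S / (N * K) * (1 + 1 / ρ)) -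
        S / (N * K) * (1 / ρ) = 0 := by
  intro g δ
  obtain ⟨hlo, hhi⟩ := hgbar
  have h0 : 0 < gbar := lt_of_le_of_lt (le_max_left _ _) hlo
  have hSN : 0 < gbar + S / N - 1 := by
    have := lt_of_le_of_lt (le_trans (le_max_left _ _) (le_max_right _ _)) hlo
    linarith
  have h1 : 0 < 1 - gbar := by linarith
  have hg0 : g = (1 - gbar) / gbar := rfl
  have hδ0 : δ = (1 - gbar) / (gbar * (gbar + S / N - 1)) := rfl
  have hδpos : 0 < δ := by rw [hδ0]; positivity
  have hNe : N ≠ 0 := ne_of_gt hN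
  have hSe : S ≠ 0 := ne_of_gt hS
  have hKe : K ≠ 0 := ne_of_gt hK
  have hρe : ρ ≠ 0 := ne_of_gt hρ
  have hge : gbar ≠ 0 := ne_of_gt h0
  have hSNe : gbar + S / N - 1 ≠ 0 := ne_of_gt hSN
  have h1e : 1 - gbar ≠ 0 := ne_of_gt h1
  have hqpos : 0 < gbar * N + S - N := by
    have h := mul_pos hSN hN
    have : (gbar + S / N - 1) * N = gbar * N + S - N := by field_simp
    linarith [this ▸ h]
  have hq : gbar * N + S - N ≠ 0 := ne_of_gt hqpos
  have e1 : gbar = 1 / (1 + g) := by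
    rw [hg0]; field_simp; ring
  have hden : 1 + gbar * δ = (S / N) / (gbar + S / N - 1) := by
    rw [hδ0]; field_simp [hq]; ring
  have e2 : g = (S / N) * δ / (1 + gbar * δ) := by
    rw [hden, hδ0, hg0]; field_simp [hq]
  have hgδ : g / δ = gbar + S / N - 1 := by
    rw [hg0, hδ0]; field_simp [hq]
  have hD : K * gbar * g / δ + S / N / ρ
      = K * gbar * (gbar + S / N - 1) + (S / N) / ρ := by
    rw [mul_div_assoc, hgδ]
  have hDpos : 0 < K * gbar * (gbar + S / N - 1) + (S / N) / ρ := by positivity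
  have factor : gbar ^ 3 - gbar ^ 2 * (2 - S / N - 1 / K) +
        gbar * (1 - S / N - 1 / K + S / (N * K) * (1 + 1 / ρ)) -
        S / (N * K) * (1 / ρ)
      = (-(1 / K)) * ((1 - gbar) * (K * gbar * (gbar + S / N - 1) + S / N / ρ)
          - 1 * (gbar * (gbar + S / N - 1))) := by
    field_simp
    ring
  have key : (δ = 1 / (K * gbar * g / δ + (S / N) / ρ)) ↔
      gbar ^ 3 - gbar ^ 2 * (2 - S / N - 1 / K) +
        gbar * (1 - S / N - 1 / K + S / (N * K) * (1 + 1 / ρ)) -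
        S / (N * K) * (1 / ρ) = 0 := by
    rw [hD, eq_div_iff hDpos.ne', hδ0, div_mul_eq_mul_div,
      div_eq_iff (by positivity : gbar * (gbar + S / N - 1) ≠ 0), factor,
      mul_eq_zero, sub_eq_zero]
    have hKne : -(1 / K) ≠ 0 := neg_ne_zero.mpr (one_div_ne_zero hKe)
    constructor
    · intro h; exact Or.inr h
    · rintro (h | h)
      · exact absurd h hKne
      · exact h
  constructor
  · rintro ⟨-, -, h3⟩; exact key.mp h3
  · intro h; exact ⟨e1, e2, key.mpr h⟩
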